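/- Let Σ ⊂ (Y, α) be a hypersurface written as a transverse zero level set {h = 0} with associated contact field X (α(X) = h), and let Z be a contact vector field transverse to Σ with k = α(Z). Then along Γ = {k = 0} ∩ Σ one has dk(X) = −dh(Z); in particular if Z ⋔ Σ then dk(X) is nonvanishing along Γ. -/
import Mathlib

/-- At a point of `Γ = {k = 0} ∩ Σ`: from the contact vector field equations
`dk + ι_Z dα = dk(R)·α` and `dh + ι_X dα = dh(R)·α`, with `α X = h = 0` and
`α Z = k = 0` there, one gets `dk(X) = -dh(Z)`; in particular if `Z ⋔ Σ`
(i.e. `dh(Z) ≠ 0`) then `dk(X) ≠ 0`. -/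
theorem stmt_14 {E : Type*} [AddCommGroup E] [Module ℝ E]
    (α dk dh : E →ₗ[ℝ] ℝ) (ω : E →ₗ[ℝ] E →ₗ[ℝ] ℝ)
    (hanti : ∀ v w : E, ω v w = -ω w v)
    (X Z : E) (c₁ c₂ : ℝ)
    (heq1 : ∀ v : E, dk v + ω Z v = c₁ * α v)
    (heq2 : ∀ v : E, dh v + ω X v = c₂ * α v)
    (hX : α X = 0) (hZ : α Z = 0) :
    dk X = -dh Z ∧ (dh Z ≠ 0 → dk X ≠ 0) := by
  have h1 := heq1 X
  have h2 := heq2 Z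
  rw [hX] at h1; rw [hZ] at h2
  have ha := hanti Z X
  have : dk X = -dh Z := by linarith
  exact ⟨this, fun h => by simpa [this] using h⟩
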